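/- Suppose x* is a fixed point of the discrete-time SIS dynamics x ↦ x + h((I − diag(x))B − D)x with h ≠ 0, all components x*_i ∈ [0,1], and B nonnegative irreducible, D diagonal nonnegative. Then either x* = 0, or every component of x* is strictly positive (i.e., a nonzero equilibrium in [0,1]^n must be strictly positive in every coordinate). -/
import Mathlib


open Matrix

/-- A nonnegative matrix is irreducible iff for every pair of indices some power
has a positive entry there. -/
def MatrixIrreducible {n : ℕ} (M : Matrix (Fin n) (Fin n) ℝ) : Prop :=
  ∀ i j, ∃ k : ℕ, 0 < (M ^ k) i j

lemma pow_entry_nonneg {n : ℕ} (B : Matrix (Fin n) (Fin n) ℝ)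
    (hB : ∀ i j, 0 ≤ B i j) : ∀ k i j, 0 ≤ (B ^ k) i j := by
  intro k
  induction k with
  | zero =>
    intro i j
    simp [Matrix.one_apply]
    by_cases hij : i = j <;> simp [hij]
  | succ k ih =>
    intro i j
    rw [pow_succ, Matrix.mul_apply]
    exact Finset.sum_nonneg fun l _ => mul_nonneg (ih i l) (hB l j)

/-- A nonzero equilibrium of the SIS dynamics in `[0,1]^n`, with `B` nonnegative
irreducible, must be strictly positive in every coordinate. -/
theorem equilibrium_zero_or_pos (n : ℕ) (B : Matrix (Fin n) (Fin n) ℝ)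
    (δ : Fin n → ℝ) (h : ℝ) (hh : h ≠ 0)
    (hB : ∀ i j, 0 ≤ B i j) (hirr : MatrixIrreducible B)
    (hδ : ∀ i, 0 ≤ δ i)
    (x : Fin n → ℝ) (hx : ∀ i, x i ∈ Set.Icc (0 : ℝ) 1)
    (heq : ∀ i, (1 - x i) * (∑ j, B i j * x j) = δ i * x i) :
    x = 0 ∨ ∀ i, 0 < x i := by
  by_cases hx0 : x = 0
  · exact Or.inl hx0
  right
  -- each row term vanishes at a zero coordinate
  have hzero : ∀ i, x i = 0 → ∀ j, B i j * x j = 0 := by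
    intro i hi
    have hsum : ∑ j, B i j * x j = 0 := by
      have := heq i
      rw [hi] at this
      simpa using this
    have h1 : ∀ j ∈ Finset.univ, 0 ≤ B i j * x j :=
      fun j _ => mul_nonneg (hB i j) (hx j).1
    intro j
    exact (Finset.sum_eq_zero_iff_of_nonneg h1).1 hsum j (Finset.mem_univ j)
  -- key: powers also vanish
  have key : ∀ k : ℕ, ∀ i, x i = 0 → ((B ^ k) *ᵥ x) i = 0 := by
    intro k
    induction k with
    | zero => intro i hi; simpa [Matrix.mulVec, dotProduct, Matrix.one_apply] using hi
    | succ k ih =>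
      intro i hi
      rw [pow_succ', ← Matrix.mulVec_mulVec]
      have : ∀ j ∈ Finset.univ, B i j * ((B ^ k) *ᵥ x) j = 0 := by
        intro j _
        by_cases hBij : B i j = 0
        · simp [hBij]
        · have hxj : x j = 0 := by
            have := hzero i hi j
            rcases mul_eq_zero.1 this with h1 | h1
            · exact absurd h1 hBij
            · exact h1
          rw [ih j hxj, mul_zero]
      simpa [Matrix.mulVec, dotProduct] using Finset.sum_eq_zero this
  intro i
  rcases lt_or_eq_of_le (hx i).1 with hpos | hzi
  · exact hpos
  exfalso
  obtain ⟨j0, hj0⟩ : ∃ j0, x j0 ≠ 0 := by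
    by_contra hc
    push_neg at hc
    exact hx0 (funext fun j => hc j)
  have hj0pos : 0 < x j0 := lt_of_le_of_ne (hx j0).1 (Ne.symm hj0)
  obtain ⟨k, hk⟩ := hirr i j0
  have h0 := key k i hzi.symm
  have hlb : (B ^ k) i j0 * x j0 ≤ ((B ^ k) *ᵥ x) i := by
    rw [Matrix.mulVec, dotProduct]
    exact Finset.single_le_sum
      (fun j _ => mul_nonneg (pow_entry_nonneg B hB k i j) (hx j).1)
      (Finset.mem_univ j0)
  have : 0 < ((B ^ k) *ᵥ x) i :=
    lt_of_lt_of_le (mul_pos hk hj0pos) hlb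
  rw [h0] at this
  exact lt_irrefl 0 this
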